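/- Let (X,r) be a square-free solution of finite order |X| = n with cyclic degree p, let G = G(X,r), and let F_p be the subgroup of G generated by {ι(x)^p : x ∈ X}. Then F_p has index exactly p^n in G. -/

import Mathlib

/-- The left action `σ_x(y)`: first component of `r (x, y)`. -/
def sig {X : Type*} (r : X × X → X × X) (x y : X) : X := (r (x, y)).1

/-- The right action `τ_y(x)`: second component of `r (x, y)`. -/
def tau {X : Type*} (r : X × X → X × X) (y x : X) : X := (r (x, y)).2

/-- `r¹² = r × id`. -/
def r12 {X : Type*} (r : X × X → X × X) : X × X × X → X × X × X :=
  fun t => ((r (t.1, t.2.1)).1, (r (t.1, t.2.1)).2, t.2.2)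

/-- `r²³ = id × r`. -/
def r23 {X : Type*} (r : X × X → X × X) : X × X × X → X × X × X :=
  fun t => (t.1, (r (t.2.1, t.2.2)).1, (r (t.2.1, t.2.2)).2)

/-- The braid relation `r¹² ∘ r²³ ∘ r¹² = r²³ ∘ r¹² ∘ r²³`. -/
def IsBraided {X : Type*} (r : X × X → X × X) : Prop :=
  r12 r ∘ r23 r ∘ r12 r = r23 r ∘ r12 r ∘ r23 r

/-- Nondegeneracy: every `σ_x` and every `τ_y` is bijective. -/
def Nondegenerate {X : Type*} (r : X × X → X × X) : Prop :=
  (∀ x, Function.Bijective (sig r x)) ∧ (∀ y, Function.Bijective (tau r y))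

/-- The defining relators of the group `G(X,r)`:
`x · y · (σ_x(y) · τ_y(x))⁻¹` for all `x, y ∈ X`. -/
def ybRels {X : Type*} (r : X × X → X × X) : Set (FreeGroup X) :=
  { w | ∃ x y : X, w = FreeGroup.of x * FreeGroup.of y *
      (FreeGroup.of (sig r x y) * FreeGroup.of (tau r y x))⁻¹ }

/-- The group `G(X,r)` associated with `(X,r)`, presented by generators `X`
and relations `x y = σ_x(y) τ_y(x)`. -/
abbrev YBGroup {X : Type*} (r : X × X → X × X) := PresentedGroup (ybRels r)

/-- The canonical map `ι : X → G(X,r)`. -/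
def ybι {X : Type*} (r : X × X → X × X) : X → YBGroup r := PresentedGroup.of

namespace YB

variable {X : Type*} {r : X × X → X × X}

lemma r_eq (r : X × X → X × X) (x y : X) : r (x, y) = (sig r x y, tau r y x) := rfl

lemma sig_sf (hsf : ∀ x : X, r (x, x) = (x, x)) (x : X) : sig r x x = x := by
  have := hsf x; simp [sig, this]

lemma tau_sf (hsf : ∀ x : X, r (x, x) = (x, x)) (x : X) : tau r x x = x := by
  have := hsf x; simp [tau, this]

/-- Involutivity, first component. -/
lemma I1 (hinv : Function.Involutive r) (x y : X) :
    sig r (sig r x y) (tau r y x) = x := by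
  exact congrArg Prod.fst (hinv (x, y))

/-- Involutivity, second component. -/
lemma I2 (hinv : Function.Involutive r) (x y : X) :
    tau r (tau r y x) (sig r x y) = y := by
  exact congrArg Prod.snd (hinv (x, y))

/-- Braid relation, first component. -/
lemma B1 (hbr : IsBraided r) (x y z : X) :
    sig r (sig r x y) (sig r (tau r y x) z) = sig r x (sig r y z) := by
  have := congrFun hbr (x, y, z)
  simp only [Function.comp_apply, r12, r23] at this
  exact congrArg (fun t => t.1) this

/-- lri: `σ_y (τ_y x) = x`. -/
lemma lri (hnd : Nondegenerate r) (hinv : Function.Involutive r) (hbr : IsBraided r)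
    (hsf : ∀ x : X, r (x, x) = (x, x)) (x y : X) : sig r y (tau r y x) = x := by
  have h := B1 hbr x y (tau r y x)
  rw [show sig r (tau r y x) (tau r y x) = tau r y x from sig_sf hsf _] at h
  rw [I1 hinv x y] at h
  apply (hnd.1 x).1
  rw [sig_sf hsf x, ← h]

/-- irl: `τ_y (σ_y x) = x`. -/
lemma irl (hnd : Nondegenerate r) (hinv : Function.Involutive r) (hbr : IsBraided r)
    (hsf : ∀ x : X, r (x, x) = (x, x)) (x y : X) : tau r y (sig r y x) = x := by
  apply (hnd.1 y).1
  rw [lri hnd hinv hbr hsf]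

/-- Cyclic condition: `τ_{σ_x y} x = τ_y x`. -/
lemma cc (hnd : Nondegenerate r) (hinv : Function.Involutive r) (hbr : IsBraided r)
    (hsf : ∀ x : X, r (x, x) = (x, x)) (x y : X) :
    tau r (sig r x y) x = tau r y x := by
  apply (hnd.1 (sig r x y)).1
  rw [lri hnd hinv hbr hsf, I1 hinv]

lemma cc_iter (hnd : Nondegenerate r) (hinv : Function.Involutive r) (hbr : IsBraided r)
    (hsf : ∀ x : X, r (x, x) = (x, x)) (x y : X) (k : ℕ) :
    tau r ((sig r x)^[k] y) x = tau r y x := by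
  induction k with
  | zero => rfl
  | succ k ih =>
    rw [Function.iterate_succ_apply', cc hnd hinv hbr hsf, ih]

section GroupLemmas

/-- The defining relation holds in `G(X,r)`. -/
lemma rel_G (r : X × X → X × X) (x y : X) :
    ybι r x * ybι r y = ybι r (sig r x y) * ybι r (tau r y x) := by
  have hmem : (FreeGroup.of x * FreeGroup.of y *
      (FreeGroup.of (sig r x y) * FreeGroup.of (tau r y x))⁻¹) ∈
      Subgroup.normalClosure (ybRels r) :=
    Subgroup.subset_normalClosure ⟨x, y, rfl⟩
  have h1 : (PresentedGroup.mk (ybRels r)) (FreeGroup.of x * FreeGroup.of y *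
      (FreeGroup.of (sig r x y) * FreeGroup.of (tau r y x))⁻¹) = 1 :=
    (QuotientGroup.eq_one_iff _).mpr hmem
  simp only [map_mul, map_inv] at h1
  exact mul_inv_eq_one.mp h1

/-- Commutation: `ι x ^ k * ι y = ι (σ_x^[k] y) * ι (τ_y x) ^ k`. -/
lemma pow_mul_of (hnd : Nondegenerate r) (hinv : Function.Involutive r) (hbr : IsBraided r)
    (hsf : ∀ x : X, r (x, x) = (x, x)) (x y : X) (k : ℕ) :
    ybι r x ^ k * ybι r y = ybι r ((sig r x)^[k] y) * ybι r (tau r y x) ^ k := by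
  induction k with
  | zero => simp
  | succ k ih =>
    rw [pow_succ', mul_assoc, ih, ← mul_assoc, rel_G r x ((sig r x)^[k] y),
      cc_iter hnd hinv hbr hsf, ← Function.iterate_succ_apply' (sig r x) k y,
      mul_assoc, ← pow_succ']

/-- Commutation with `p`-th powers: `ι x ^ p * ι y = ι y * ι (τ_y x) ^ p`. -/
lemma pow_p_comm (hnd : Nondegenerate r) (hinv : Function.Involutive r) (hbr : IsBraided r)
    (hsf : ∀ x : X, r (x, x) = (x, x)) {p : ℕ} (hpord : ∀ x : X, (sig r x)^[p] = id)
    (x y : X) : ybι r x ^ p * ybι r y = ybι r y * ybι r (tau r y x) ^ p := by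
  rw [pow_mul_of hnd hinv hbr hsf, hpord x]; rfl

variable (r) in
/-- The subgroup `F_p`. -/
def Fp (p : ℕ) : Subgroup (YBGroup r) :=
  Subgroup.closure (Set.range fun x : X => ybι r x ^ p)

lemma conj_gen_mem (hnd : Nondegenerate r) (hinv : Function.Involutive r) (hbr : IsBraided r)
    (hsf : ∀ x : X, r (x, x) = (x, x)) {p : ℕ} (hpord : ∀ x : X, (sig r x)^[p] = id)
    (y x : X) :
    ybι r y * ybι r x ^ p * (ybι r y)⁻¹ ∈ Fp r p ∧
      (ybι r y)⁻¹ * ybι r x ^ p * ybι r y ∈ Fp r p := by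
  constructor
  · obtain ⟨z, hz⟩ := (hnd.2 y).2 x
    have h := pow_p_comm hnd hinv hbr hsf hpord z y
    rw [hz] at h
    have : ybι r y * ybι r x ^ p * (ybι r y)⁻¹ = ybι r z ^ p := by
      rw [← h]; group
    rw [this]
    exact Subgroup.subset_closure ⟨z, rfl⟩
  · have h := pow_p_comm hnd hinv hbr hsf hpord x y
    have : (ybι r y)⁻¹ * ybι r x ^ p * ybι r y = ybι r (tau r y x) ^ p := by
      rw [mul_assoc, h, ← mul_assoc, inv_mul_cancel, one_mul]
    rw [this]
    exact Subgroup.subset_closure ⟨tau r y x, rfl⟩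

lemma conj_mem_Fp (hnd : Nondegenerate r) (hinv : Function.Involutive r) (hbr : IsBraided r)
    (hsf : ∀ x : X, r (x, x) = (x, x)) {p : ℕ} (hpord : ∀ x : X, (sig r x)^[p] = id)
    (y : X) : ∀ h ∈ Fp r p,
      ybι r y * h * (ybι r y)⁻¹ ∈ Fp r p ∧ (ybι r y)⁻¹ * h * ybι r y ∈ Fp r p := by
  intro h hh
  induction hh using Subgroup.closure_induction with
  | mem g hg =>
    obtain ⟨x, rfl⟩ := hg
    exact conj_gen_mem hnd hinv hbr hsf hpord y x
  | one =>
    constructor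
    · rw [mul_one, mul_inv_cancel]; exact Subgroup.one_mem _
    · rw [mul_one, inv_mul_cancel]; exact Subgroup.one_mem _
  | mul a b _ _ ha hb =>
    constructor
    · have : ybι r y * (a * b) * (ybι r y)⁻¹ =
        (ybι r y * a * (ybι r y)⁻¹) * (ybι r y * b * (ybι r y)⁻¹) := by group
      rw [this]; exact Subgroup.mul_mem _ ha.1 hb.1
    · have : (ybι r y)⁻¹ * (a * b) * ybι r y =
        ((ybι r y)⁻¹ * a * ybι r y) * ((ybι r y)⁻¹ * b * ybι r y) := by group
      rw [this]; exact Subgroup.mul_mem _ ha.2 hb.2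
  | inv a _ ha =>
    constructor
    · have : ybι r y * a⁻¹ * (ybι r y)⁻¹ = (ybι r y * a * (ybι r y)⁻¹)⁻¹ := by group
      rw [this]; exact Subgroup.inv_mem _ ha.1
    · have : (ybι r y)⁻¹ * a⁻¹ * ybι r y = ((ybι r y)⁻¹ * a * ybι r y)⁻¹ := by group
      rw [this]; exact Subgroup.inv_mem _ ha.2

/-- `F_p` is a normal subgroup. -/
lemma Fp_normal (hnd : Nondegenerate r) (hinv : Function.Involutive r) (hbr : IsBraided r)
    (hsf : ∀ x : X, r (x, x) = (x, x)) {p : ℕ} (hpord : ∀ x : X, (sig r x)^[p] = id) :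
    (Fp r p).Normal := by
  constructor
  intro h hh g
  have key : ∀ g : YBGroup r, ∀ h ∈ Fp r p,
      g * h * g⁻¹ ∈ Fp r p ∧ g⁻¹ * h * g ∈ Fp r p := by
    intro g
    induction g using PresentedGroup.induction_on with
    | _ z =>
      induction z using FreeGroup.induction_on with
      | C1 =>
        intro h hh
        rw [map_one]
        exact ⟨by rw [one_mul, inv_one, mul_one]; exact hh,
          by rw [inv_one, one_mul, mul_one]; exact hh⟩
      | of y =>
        intro h hh
        exact conj_mem_Fp hnd hinv hbr hsf hpord y h hh
      | inv_of y ih =>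
        intro h hh
        rw [map_inv, inv_inv]
        exact ⟨(ih h hh).2, (ih h hh).1⟩
      | mul a b iha ihb =>
        intro h hh
        rw [map_mul]
        set A := (PresentedGroup.mk (ybRels r)) a
        set B := (PresentedGroup.mk (ybRels r)) b
        constructor
        · have : A * B * h * (A * B)⁻¹ = A * (B * h * B⁻¹) * A⁻¹ := by group
          rw [this]
          exact (iha _ ((ihb h hh).1)).1
        · have : (A * B)⁻¹ * h * (A * B) = B⁻¹ * (A⁻¹ * h * A) * B := by group
          rw [this]
          exact (ihb _ ((iha h hh).2)).2
  exact (key g h hh).1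

end GroupLemmas

section Action

variable [Fintype X] [DecidableEq X]

variable (r) in
/-- `σ_x` as an equiv. -/
noncomputable def Sg (hnd : Nondegenerate r) (x : X) : X ≃ X :=
  Equiv.ofBijective _ (hnd.1 x)

lemma Sg_apply (hnd : Nondegenerate r) (x j : X) : Sg r hnd x j = sig r x j := rfl

lemma sig_symm_apply (hnd : Nondegenerate r) (x j : X) :
    sig r x ((Sg r hnd x).symm j) = j := (Sg r hnd x).apply_symm_apply j

lemma Sg_symm_self (hnd : Nondegenerate r) (hsf : ∀ x : X, r (x, x) = (x, x)) (x : X) :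
    (Sg r hnd x).symm x = x := by
  rw [Equiv.symm_apply_eq, Sg_apply, sig_sf hsf]

/-- basis vector -/
def eb (p : ℕ) (x : X) : X → ZMod p := fun j => if j = x then 1 else 0

lemma eb_self (p : ℕ) (x : X) : eb p x x = 1 := if_pos rfl
lemma eb_ne (p : ℕ) {x j : X} (h : j ≠ x) : eb p x j = 0 := if_neg h

lemma eb_congr (p : ℕ) {a c b d : X} (h : a = c ↔ b = d) : eb p c a = eb p d b := by
  unfold eb
  by_cases hc : a = c
  · rw [if_pos hc, if_pos (h.mp hc)]
  · rw [if_neg hc, if_neg (fun hd => hc (h.mpr hd))]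

variable (r) in
/-- The affine permutation `v ↦ e_x + v ∘ σ_x⁻¹` of `(ZMod p)^X`. -/
noncomputable def Ap (hnd : Nondegenerate r) (p : ℕ) (x : X) :
    Equiv.Perm (X → ZMod p) where
  toFun v := eb p x + v ∘ (Sg r hnd x).symm
  invFun v := (v - eb p x) ∘ (Sg r hnd x)
  left_inv v := by
    funext j
    simp only [Pi.add_apply, Pi.sub_apply, Function.comp_apply, Equiv.symm_apply_apply]
    ring
  right_inv v := by
    funext j
    simp only [Pi.add_apply, Pi.sub_apply, Function.comp_apply, Equiv.apply_symm_apply]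
    ring

lemma Ap_apply (hnd : Nondegenerate r) (p : ℕ) (x : X) (v : X → ZMod p) (j : X) :
    Ap r hnd p x v j = eb p x j + v ((Sg r hnd x).symm j) := rfl

lemma Ap_symm_apply (hnd : Nondegenerate r) (p : ℕ) (x : X) (v : X → ZMod p) (j : X) :
    (Ap r hnd p x).symm v j = v (sig r x j) - eb p x (sig r x j) := rfl

lemma symm_comp_eq (hnd : Nondegenerate r) (hbr : IsBraided r) (x y j : X) :
    (Sg r hnd y).symm ((Sg r hnd x).symm j) =
      (Sg r hnd (tau r y x)).symm ((Sg r hnd (sig r x y)).symm j) := by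
  apply (hnd.1 y).1
  apply (hnd.1 x).1
  rw [sig_symm_apply, sig_symm_apply, ← B1 hbr, sig_symm_apply, sig_symm_apply]

lemma Ap_rel (hnd : Nondegenerate r) (hinv : Function.Involutive r) (hbr : IsBraided r)
    (p : ℕ) (x y : X) :
    Ap r hnd p x * Ap r hnd p y = Ap r hnd p (sig r x y) * Ap r hnd p (tau r y x) := by
  apply Equiv.ext
  intro v
  funext j
  simp only [Equiv.Perm.mul_apply, Ap_apply]
  rw [← symm_comp_eq hnd hbr x y j]
  have h1 : eb p y ((Sg r hnd x).symm j) = eb p (sig r x y) j :=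
    eb_congr p (by rw [Equiv.symm_apply_eq, Sg_apply])
  have h2 : eb p (tau r y x) ((Sg r hnd (sig r x y)).symm j) = eb p x j :=
    eb_congr p (by rw [Equiv.symm_apply_eq, Sg_apply, I1 hinv])
  rw [h1, h2]
  ring

variable (r) in
/-- The affine representation `G(X,r) →* Perm ((ZMod p)^X)`. -/
noncomputable def Phi (hnd : Nondegenerate r) (hinv : Function.Involutive r)
    (hbr : IsBraided r) (p : ℕ) : YBGroup r →* Equiv.Perm (X → ZMod p) :=
  PresentedGroup.toGroup (f := fun x => Ap r hnd p x) (by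
    rintro w ⟨x, y, rfl⟩
    simp only [map_mul, map_inv, FreeGroup.lift_apply_of]
    rw [Ap_rel hnd hinv hbr p x y, mul_inv_cancel])

lemma Phi_of (hnd : Nondegenerate r) (hinv : Function.Involutive r)
    (hbr : IsBraided r) (p : ℕ) (x : X) :
    Phi r hnd hinv hbr p (ybι r x) = Ap r hnd p x :=
  PresentedGroup.toGroup.of _

lemma Ap_pow_apply (hnd : Nondegenerate r) (hsf : ∀ x : X, r (x, x) = (x, x)) (p : ℕ)
    (x : X) (k : ℕ) (v : X → ZMod p) (j : X) :
    (Ap r hnd p x ^ k) v j = k • eb p x j + v (((Sg r hnd x).symm)^[k] j) := by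
  induction k generalizing j with
  | zero => simp
  | succ k ih =>
    rw [pow_succ', Equiv.Perm.mul_apply, Ap_apply, ih ((Sg r hnd x).symm j),
      ← Function.iterate_succ_apply]
    have : eb p x ((Sg r hnd x).symm j) = eb p x j :=
      eb_congr p (by rw [Equiv.symm_apply_eq, Sg_apply, sig_sf hsf])
    rw [this, succ_nsmul']
    ring

lemma Ap_pow_p (hnd : Nondegenerate r) (hsf : ∀ x : X, r (x, x) = (x, x)) {p : ℕ}
    (hpord : ∀ x : X, (sig r x)^[p] = id) (x : X) :
    Ap r hnd p x ^ p = 1 := by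
  apply Equiv.ext
  intro v
  funext j
  rw [Ap_pow_apply hnd hsf p x p v j]
  have hit : ((Sg r hnd x).symm)^[p] j = j := by
    have hL : Function.LeftInverse (Sg r hnd x).symm (Sg r hnd x) :=
      (Sg r hnd x).left_inv
    have := (hL.iterate p) j
    have hfull : (⇑(Sg r hnd x))^[p] j = j := by
      have : (⇑(Sg r hnd x))^[p] = (sig r x)^[p] := rfl
      rw [this, hpord x]; rfl
    calc ((Sg r hnd x).symm)^[p] j = ((Sg r hnd x).symm)^[p] ((⇑(Sg r hnd x))^[p] j) := by
          rw [hfull]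
      _ = j := (hL.iterate p) j
  rw [hit]
  have : (p • eb p x j) = 0 := by
    rw [nsmul_eq_mul]
    simp [ZMod.natCast_self]
  rw [this, Equiv.Perm.one_apply, zero_add]

lemma Fp_le_ker (hnd : Nondegenerate r) (hinv : Function.Involutive r)
    (hbr : IsBraided r) (hsf : ∀ x : X, r (x, x) = (x, x)) {p : ℕ}
    (hpord : ∀ x : X, (sig r x)^[p] = id) :
    Fp r p ≤ (Phi r hnd hinv hbr p).ker := by
  rw [Fp, Subgroup.closure_le]
  rintro g ⟨x, rfl⟩
  simp only [SetLike.mem_coe, MonoidHom.mem_ker, map_pow, Phi_of]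
  exact Ap_pow_p hnd hsf hpord x

end Action

section Transversal

variable [Fintype X] [DecidableEq X] {p : ℕ} [NeZero p]

lemma val_sub_one {a : ZMod p} (h : a ≠ 0) : (a - 1).val + 1 = a.val := by
  have h1 : a.val ≠ 0 := fun hv => h ((ZMod.val_eq_zero a).mp hv)
  have h2 : ((a.val : ℕ) : ZMod p) = a := ZMod.natCast_rightInverse a
  have h3 : a - 1 = ((a.val - 1 : ℕ) : ZMod p) := by
    rw [Nat.cast_sub (Nat.one_le_iff_ne_zero.mpr h1), h2, Nat.cast_one]
  rw [h3, ZMod.val_cast_of_lt (by have := ZMod.val_lt a; omega)]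
  omega

lemma val_add_one {a : ZMod p} (h : a.val + 1 < p) : (a + 1).val = a.val + 1 := by
  have h2 : ((a.val : ℕ) : ZMod p) = a := ZMod.natCast_rightInverse a
  have h3 : a + 1 = ((a.val + 1 : ℕ) : ZMod p) := by
    rw [Nat.cast_add, h2, Nat.cast_one]
  rw [h3, ZMod.val_cast_of_lt h]

variable (p) in
/-- The norm of a vector in `(ZMod p)^X`. -/
def Nv (v : X → ZMod p) : ℕ := ∑ j, (v j).val

lemma Nv_eq_zero {v : X → ZMod p} : Nv p v = 0 ↔ v = 0 := by
  constructor
  · intro h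
    funext j
    have := Finset.sum_eq_zero_iff.mp h j (Finset.mem_univ j)
    exact (ZMod.val_eq_zero _).mp this
  · rintro rfl
    apply Finset.sum_eq_zero
    intro j _
    exact ZMod.val_zero

lemma Nv_symm (hnd : Nondegenerate r) {v : X → ZMod p} {x : X} (h : v x ≠ 0) :
    Nv p ((Ap r hnd p x).symm v) + 1 = Nv p v := by
  unfold Nv
  have hre : ∑ j, (((Ap r hnd p x).symm v) j).val = ∑ i, ((v - eb p x) i).val := by
    rw [← Equiv.sum_comp (Sg r hnd x) (fun i => ((v - eb p x) i).val)]
    apply Finset.sum_congr rfl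
    intro j _
    rw [Ap_symm_apply]
    rfl
  rw [hre, ← Finset.add_sum_erase _ _ (Finset.mem_univ x),
    ← Finset.add_sum_erase _ (fun j => (v j).val) (Finset.mem_univ x)]
  have h1 : ((v - eb p x) x).val + 1 = (v x).val := by
    rw [Pi.sub_apply, eb_self]; exact val_sub_one h
  have h2 : ∑ i ∈ Finset.univ.erase x, ((v - eb p x) i).val
      = ∑ i ∈ Finset.univ.erase x, (v i).val := by
    apply Finset.sum_congr rfl
    intro i hi
    rw [Pi.sub_apply, eb_ne p (Finset.ne_of_mem_erase hi), sub_zero]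
  rw [h2]
  omega

lemma Nv_nonwrap (hnd : Nondegenerate r) (hsf : ∀ x : X, r (x, x) = (x, x))
    {v : X → ZMod p} {x : X} (h : (v x).val + 1 < p) :
    Nv p (Ap r hnd p x v) = Nv p v + 1 := by
  unfold Nv
  rw [← Equiv.sum_comp (Sg r hnd x) (fun j => ((Ap r hnd p x v) j).val)]
  have key : ∀ i, (Ap r hnd p x v) (Sg r hnd x i) = eb p x i + v i := by
    intro i
    rw [Ap_apply, Equiv.symm_apply_apply]
    congr 1
    refine eb_congr p ?_
    rw [Sg_apply]
    constructor
    · intro hi; exact (hnd.1 x).1 (by rw [hi, sig_sf hsf])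
    · intro hi; rw [hi]; exact sig_sf hsf x
  rw [Finset.sum_congr rfl fun i _ => congrArg ZMod.val (key i),
    ← Finset.add_sum_erase _ _ (Finset.mem_univ x),
    ← Finset.add_sum_erase _ (fun j => (v j).val) (Finset.mem_univ x)]
  have h1 : (eb p x x + v x).val = (v x).val + 1 := by
    rw [eb_self, add_comm]; exact val_add_one h
  have h2 : ∑ i ∈ Finset.univ.erase x, (eb p x i + v i).val
      = ∑ i ∈ Finset.univ.erase x, (v i).val := by
    apply Finset.sum_congr rfl
    intro i hi
    rw [eb_ne p (Finset.ne_of_mem_erase hi), zero_add]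
  rw [h1, h2]
  omega

lemma Ap_at_base (hnd : Nondegenerate r) (hsf : ∀ x : X, r (x, x) = (x, x))
    (x : X) (v : X → ZMod p) : Ap r hnd p x v x = v x + 1 := by
  rw [Ap_apply, Sg_symm_self hnd hsf, eb_self, add_comm]

lemma exists_ne_zero {v : X → ZMod p} (h : v ≠ 0) : ∃ j, v j ≠ 0 := by
  by_contra hc
  push_neg at hc
  exact h (funext fun j => hc j)

noncomputable def pick (v : X → ZMod p) (h : v ≠ 0) : X := (exists_ne_zero h).choose

lemma pick_spec (v : X → ZMod p) (h : v ≠ 0) : v (pick v h) ≠ 0 :=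
  (exists_ne_zero h).choose_spec

variable [hFN : (Fp r p).Normal]

variable (r p) in
noncomputable def qmk : YBGroup r →* (YBGroup r ⧸ Fp r p) := QuotientGroup.mk' (Fp r p)

variable (r p) in
noncomputable def PhiBar (hnd : Nondegenerate r) (hinv : Function.Involutive r)
    (hbr : IsBraided r) (hsf : ∀ x : X, r (x, x) = (x, x))
    (hpord : ∀ x : X, (sig r x)^[p] = id) :
    (YBGroup r ⧸ Fp r p) →* Equiv.Perm (X → ZMod p) :=
  QuotientGroup.lift (Fp r p) (Phi r hnd hinv hbr p)
    (fun g hg => MonoidHom.mem_ker.mp (Fp_le_ker hnd hinv hbr hsf hpord hg))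

lemma PhiBar_mk (hnd : Nondegenerate r) (hinv : Function.Involutive r)
    (hbr : IsBraided r) (hsf : ∀ x : X, r (x, x) = (x, x))
    (hpord : ∀ x : X, (sig r x)^[p] = id) (g : YBGroup r) :
    PhiBar r p hnd hinv hbr hsf hpord (qmk r p g) = Phi r hnd hinv hbr p g := rfl

variable (r p) in
noncomputable def sAux (hnd : Nondegenerate r) : ℕ → (X → ZMod p) → YBGroup r ⧸ Fp r p
  | 0, _ => 1
  | k + 1, v =>
    if h : v = 0 then 1
    else qmk r p (ybι r (pick v h)) * sAux hnd k ((Ap r hnd p (pick v h)).symm v)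

lemma sAux_zero (hnd : Nondegenerate r) (k : ℕ) : sAux r p hnd k (0 : X → ZMod p) = 1 := by
  cases k <;> simp [sAux]

lemma sAux_congr (hnd : Nondegenerate r) (k k' : ℕ) (v : X → ZMod p)
    (h : Nv p v ≤ k) (h' : Nv p v ≤ k') : sAux r p hnd k v = sAux r p hnd k' v := by
  induction k generalizing k' v with
  | zero =>
    have : v = 0 := Nv_eq_zero.mp (Nat.le_zero.mp h)
    rw [this, sAux_zero, sAux_zero]
  | succ k ih =>
    by_cases h0 : v = 0
    · rw [h0, sAux_zero, sAux_zero]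
    · obtain ⟨k'', rfl⟩ : ∃ k'', k' = k'' + 1 := by
        have : Nv p v ≠ 0 := fun hc => h0 (Nv_eq_zero.mp hc)
        cases k' with
        | zero => omega
        | succ n => exact ⟨n, rfl⟩
      simp only [sAux, dif_neg h0]
      congr 1
      have hle := Nv_symm hnd (pick_spec v h0)
      exact ih _ _ (by omega) (by omega)

variable (r p) in
/-- The transversal section `(ZMod p)^X → G/F_p`. -/
noncomputable def sv (hnd : Nondegenerate r) (v : X → ZMod p) : YBGroup r ⧸ Fp r p :=
  sAux r p hnd (Nv p v) v

lemma sv_zero (hnd : Nondegenerate r) : sv r p hnd 0 = 1 := sAux_zero hnd _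

lemma sv_unfold (hnd : Nondegenerate r) {v : X → ZMod p} (h : v ≠ 0) :
    sv r p hnd v = qmk r p (ybι r (pick v h)) *
      sv r p hnd ((Ap r hnd p (pick v h)).symm v) := by
  have hNv : Nv p v ≠ 0 := fun hc => h (Nv_eq_zero.mp hc)
  obtain ⟨m, hm⟩ : ∃ m, Nv p v = m + 1 := ⟨Nv p v - 1, by omega⟩
  unfold sv
  rw [hm]
  simp only [sAux, dif_neg h]
  congr 1
  have hle := Nv_symm hnd (pick_spec v h)
  exact sAux_congr hnd _ _ _ (by omega) (by omega)

lemma chi_sAux (hnd : Nondegenerate r) (hinv : Function.Involutive r)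
    (hbr : IsBraided r) (hsf : ∀ x : X, r (x, x) = (x, x))
    (hpord : ∀ x : X, (sig r x)^[p] = id) (k : ℕ) (v : X → ZMod p) (h : Nv p v ≤ k) :
    PhiBar r p hnd hinv hbr hsf hpord (sAux r p hnd k v) 0 = v := by
  induction k generalizing v with
  | zero =>
    have : v = 0 := Nv_eq_zero.mp (Nat.le_zero.mp h)
    rw [this, sAux_zero, map_one, Equiv.Perm.one_apply]
  | succ k ih =>
    by_cases h0 : v = 0
    · rw [h0, sAux_zero, map_one, Equiv.Perm.one_apply]
    · simp only [sAux, dif_neg h0]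
      rw [map_mul, Equiv.Perm.mul_apply]
      have hle := Nv_symm hnd (pick_spec v h0)
      rw [ih _ (by omega), PhiBar_mk, Phi_of, Equiv.apply_symm_apply]

lemma chi_sv (hnd : Nondegenerate r) (hinv : Function.Involutive r)
    (hbr : IsBraided r) (hsf : ∀ x : X, r (x, x) = (x, x))
    (hpord : ∀ x : X, (sig r x)^[p] = id) (v : X → ZMod p) :
    PhiBar r p hnd hinv hbr hsf hpord (sv r p hnd v) 0 = v :=
  chi_sAux hnd hinv hbr hsf hpord _ v le_rfl

end Transversal

section Core

variable [Fintype X] [DecidableEq X] {p : ℕ} [NeZero p] [hFN : (Fp r p).Normal]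

/-- The wrap-around case of the key lemma, assuming pivot-independence at lower levels. -/
lemma wrap_chain (hnd : Nondegenerate r) (hsf : ∀ x : X, r (x, x) = (x, x))
    (hpord : ∀ x : X, (sig r x)^[p] = id)
    (x : X) (w : X → ZMod p) (hwrap : (w x).val + 1 = p)
    (hPI : ∀ v : X → ZMod p, Nv p v ≤ Nv p w → ∀ y, v y ≠ 0 →
      sv r p hnd v = qmk r p (ybι r y) * sv r p hnd ((Ap r hnd p y).symm v)) :
    qmk r p (ybι r x) * sv r p hnd w = sv r p hnd (Ap r hnd p x w) := by
  have hApow : Ap r hnd p x ^ p = 1 := Ap_pow_p hnd hsf hpord x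
  have chain : ∀ k, k ≤ p - 1 →
      ((((Ap r hnd p x).symm)^[k] w) x).val + k = p - 1 ∧
      Nv p (((Ap r hnd p x).symm)^[k] w) + k = Nv p w ∧
      qmk r p (ybι r x) * sv r p hnd w
        = qmk r p (ybι r x) ^ (k+1) * sv r p hnd (((Ap r hnd p x).symm)^[k] w) := by
    intro k hk
    induction k with
    | zero =>
      refine ⟨?_, ?_, ?_⟩
      · simp only [Function.iterate_zero_apply]; omega
      · simp only [Function.iterate_zero_apply]; omega
      · simp only [Function.iterate_zero_apply]; rw [zero_add, pow_one]
    | succ k ih =>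
      obtain ⟨hval, hNvk, hchain⟩ := ih (by omega)
      have hux : (((Ap r hnd p x).symm)^[k] w) x ≠ 0 := by
        intro h0
        rw [h0, ZMod.val_zero] at hval
        omega
      have hstep := hPI (((Ap r hnd p x).symm)^[k] w) (by omega) x hux
      have hit : (Ap r hnd p x).symm (((Ap r hnd p x).symm)^[k] w)
          = ((Ap r hnd p x).symm)^[k+1] w :=
        (Function.iterate_succ_apply' _ k w).symm
      have hsub : ((Ap r hnd p x).symm (((Ap r hnd p x).symm)^[k] w)) x
          = (((Ap r hnd p x).symm)^[k] w) x - 1 := by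
        rw [Ap_symm_apply, sig_sf hsf, eb_self]
      refine ⟨?_, ?_, ?_⟩
      · rw [← hit, hsub]
        have := val_sub_one hux
        omega
      · have := Nv_symm hnd hux
        rw [hit] at this
        omega
      · rw [hchain, hstep, hit, ← mul_assoc, ← pow_succ]
  obtain ⟨-, -, hch⟩ := chain (p - 1) le_rfl
  have hp1 : p - 1 + 1 = p := Nat.sub_add_cancel (NeZero.one_le)
  have hfin : ((Ap r hnd p x).symm)^[p-1] w = Ap r hnd p x w := by
    have h1 : Ap r hnd p x * Ap r hnd p x ^ (p-1) = 1 := by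
      rw [← pow_succ', hp1]
      exact hApow
    have h2 : Ap r hnd p x ^ (p-1) = (Ap r hnd p x)⁻¹ := eq_inv_of_mul_eq_one_right h1
    have h3 : ((Ap r hnd p x)⁻¹) ^ (p-1) = Ap r hnd p x := by
      rw [inv_pow, h2, inv_inv]
    have h4 : ((Ap r hnd p x).symm)^[p-1] w = (((Ap r hnd p x)⁻¹) ^ (p-1)) w := by
      rw [Equiv.Perm.coe_pow]
      rfl
    rw [h4, h3]
  have hq : qmk r p (ybι r x) ^ p = 1 := by
    rw [← map_pow]
    exact (QuotientGroup.eq_one_iff _).mpr (Subgroup.subset_closure ⟨x, rfl⟩)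
  rw [hch, hfin, hp1, hq, one_mul]

/-- Pivot independence: any coordinate with nonzero entry may be pulled out front. -/
lemma PI (hnd : Nondegenerate r) (hinv : Function.Involutive r) (hbr : IsBraided r)
    (hsf : ∀ x : X, r (x, x) = (x, x)) (hpord : ∀ x : X, (sig r x)^[p] = id) (m : ℕ) :
    ∀ v : X → ZMod p, Nv p v = m → ∀ y, v y ≠ 0 →
      sv r p hnd v = qmk r p (ybι r y) * sv r p hnd ((Ap r hnd p y).symm v) := by
  induction m using Nat.strong_induction_on with
  | _ m IH =>
  intro v hm y hy
  have K1small : ∀ (x : X) (w : X → ZMod p), Nv p w + 2 ≤ m →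
      qmk r p (ybι r x) * sv r p hnd w = sv r p hnd (Ap r hnd p x w) := by
    intro x w hw
    by_cases hcase : (w x).val + 1 < p
    · have hN := Nv_nonwrap hnd hsf hcase
      have hne : (Ap r hnd p x w) x ≠ 0 := by
        rw [Ap_at_base hnd hsf]
        intro h0
        have hv1 := val_add_one hcase
        rw [h0, ZMod.val_zero] at hv1
        omega
      have := IH (Nv p w + 1) (by omega) (Ap r hnd p x w) hN x hne
      rw [Equiv.symm_apply_apply] at this
      exact this.symm
    · have hwrap : (w x).val + 1 = p := by
        have := ZMod.val_lt (w x); omega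
      exact wrap_chain hnd hsf hpord x w hwrap
        (fun v' hv' y' hy' => IH (Nv p v') (by omega) v' rfl y' hy')
  have hvne : v ≠ 0 := fun h0 => hy (by rw [h0]; rfl)
  by_cases hyz : y = pick v hvne
  · rw [sv_unfold hnd hvne, ← hyz]
  · obtain ⟨z, hzd⟩ : ∃ z, pick v hvne = z := ⟨_, rfl⟩
    have hz : v z ≠ 0 := hzd ▸ pick_spec v hvne
    have hyz' : y ≠ z := fun h => hyz (h.trans hzd.symm)
    have hunf : sv r p hnd v
        = qmk r p (ybι r z) * sv r p hnd ((Ap r hnd p z).symm v) := by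
      rw [← hzd]; exact sv_unfold hnd hvne
    obtain ⟨y₁, hy1d⟩ : ∃ y₁, (Sg r hnd z).symm y = y₁ := ⟨_, rfl⟩
    have hy1 : sig r z y₁ = y := by rw [← hy1d]; exact sig_symm_apply hnd z y
    obtain ⟨a, had⟩ : ∃ a, (Ap r hnd p z).symm v = a := ⟨_, rfl⟩
    have hay : a y₁ ≠ 0 := by
      rw [← had, Ap_symm_apply, hy1, eb_ne p hyz', sub_zero]
      exact hy
    have hNa : Nv p a + 1 = Nv p v := by rw [← had]; exact Nv_symm hnd hz
    have IH1 := IH (Nv p a) (by omega) a rfl y₁ hay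
    obtain ⟨b, hbd⟩ : ∃ b, (Ap r hnd p y₁).symm a = b := ⟨_, rfl⟩
    have hNb : Nv p b + 1 = Nv p a := by rw [← hbd]; exact Nv_symm hnd hay
    obtain ⟨z₁, hz1d⟩ : ∃ z₁, tau r y₁ z = z₁ := ⟨_, rfl⟩
    have hrel : qmk r p (ybι r z) * qmk r p (ybι r y₁)
        = qmk r p (ybι r y) * qmk r p (ybι r z₁) := by
      have hr : ybι r z * ybι r y₁ = ybι r y * ybι r z₁ := by
        rw [rel_G r z y₁, hy1, hz1d]
      rw [← map_mul, hr, map_mul]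
    have hK := K1small z₁ b (by omega)
    have hF2 : sig r y z₁ = z := by
      have := I1 hinv z y₁
      rw [hy1, hz1d] at this
      exact this
    have hF3 : sig r z₁ y₁ = y := by
      have h5 : tau r z₁ y = y₁ := by
        have := I2 hinv z y₁
        rw [hy1, hz1d] at this
        exact this
      have h6 := lri hnd hinv hbr hsf y z₁
      rw [h5] at h6
      exact h6
    have hkey : Ap r hnd p z₁ b = (Ap r hnd p y).symm v := by
      funext j
      obtain ⟨s, hsd⟩ : ∃ s, (Sg r hnd z₁).symm j = s := ⟨_, rfl⟩
      have hs : sig r z₁ s = j := by rw [← hsd]; exact sig_symm_apply hnd z₁ j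
      have hB : sig r z (sig r y₁ s) = sig r y j := by
        have := B1 hbr z y₁ s
        rw [hy1, hz1d, hs] at this
        exact this.symm
      have hL : Ap r hnd p z₁ b j
          = eb p z₁ j + (v (sig r z (sig r y₁ s)) - eb p z (sig r z (sig r y₁ s))
              - eb p y₁ (sig r y₁ s)) := by
        rw [Ap_apply, hsd, ← hbd, Ap_symm_apply, ← had, Ap_symm_apply]
      have hR : (Ap r hnd p y).symm v j = v (sig r y j) - eb p y (sig r y j) :=
        Ap_symm_apply hnd p y v j
      have he1 : eb p z (sig r y j) = eb p z₁ j := by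
        refine eb_congr p ?_
        rw [← hF2]
        exact (hnd.1 y).1.eq_iff
      have he2 : eb p y₁ (sig r y₁ s) = eb p y (sig r y j) := by
        refine eb_congr p ?_
        constructor
        · intro hc
          have hsy : s = y₁ := (hnd.1 y₁).1 (by rw [hc, sig_sf hsf])
          rw [← hs, hsy, hF3, sig_sf hsf]
        · intro hc
          have hjy : j = y := (hnd.1 y).1 (by rw [hc, sig_sf hsf])
          have hsy : s = y₁ := (hnd.1 z₁).1 (by rw [hs, hjy, hF3])
          rw [hsy, sig_sf hsf]
      rw [hL, hR, hB, he1, he2]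
      ring
    calc sv r p hnd v = qmk r p (ybι r z) * sv r p hnd a := by rw [hunf, had]
      _ = qmk r p (ybι r z) * (qmk r p (ybι r y₁) * sv r p hnd b) := by
          rw [IH1, hbd]
      _ = qmk r p (ybι r y) * qmk r p (ybι r z₁) * sv r p hnd b := by
          rw [← mul_assoc, hrel]
      _ = qmk r p (ybι r y) * sv r p hnd (Ap r hnd p z₁ b) := by
          rw [mul_assoc, hK]
      _ = qmk r p (ybι r y) * sv r p hnd ((Ap r hnd p y).symm v) := by rw [hkey]

/-- The key lemma: left multiplication by a generator acts affinely on the transversal. -/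
lemma K1 (hnd : Nondegenerate r) (hinv : Function.Involutive r) (hbr : IsBraided r)
    (hsf : ∀ x : X, r (x, x) = (x, x)) (hpord : ∀ x : X, (sig r x)^[p] = id)
    (x : X) (w : X → ZMod p) :
    qmk r p (ybι r x) * sv r p hnd w = sv r p hnd (Ap r hnd p x w) := by
  by_cases hcase : (w x).val + 1 < p
  · have hN := Nv_nonwrap hnd hsf hcase
    have hne : (Ap r hnd p x w) x ≠ 0 := by
      rw [Ap_at_base hnd hsf]
      intro h0
      have hv1 := val_add_one hcase
      rw [h0, ZMod.val_zero] at hv1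
      omega
    have := PI hnd hinv hbr hsf hpord (Nv p (Ap r hnd p x w)) (Ap r hnd p x w) rfl x hne
    rw [Equiv.symm_apply_apply] at this
    exact this.symm
  · have hwrap : (w x).val + 1 = p := by
      have := ZMod.val_lt (w x); omega
    exact wrap_chain hnd hsf hpord x w hwrap
      (fun v' hv' y' hy' => PI hnd hinv hbr hsf hpord (Nv p v') v' rfl y' hy')

lemma mainP (hnd : Nondegenerate r) (hinv : Function.Involutive r) (hbr : IsBraided r)
    (hsf : ∀ x : X, r (x, x) = (x, x)) (hpord : ∀ x : X, (sig r x)^[p] = id)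
    (g : YBGroup r) (v : X → ZMod p) :
    qmk r p g * sv r p hnd v = sv r p hnd (Phi r hnd hinv hbr p g v) := by
  induction g using PresentedGroup.induction_on with
  | _ w =>
  induction w using FreeGroup.induction_on generalizing v with
  | C1 =>
    simp only [map_one, one_mul, Equiv.Perm.one_apply]
  | of x =>
    have hx : PresentedGroup.mk (ybRels r) (FreeGroup.of x) = ybι r x := rfl
    rw [hx, Phi_of]
    exact K1 hnd hinv hbr hsf hpord x v
  | inv_of x ih =>
    have hx : PresentedGroup.mk (ybRels r) (FreeGroup.of x) = ybι r x := rfl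
    rw [map_inv, hx, map_inv, map_inv, Phi_of]
    have h2 : qmk r p (ybι r x) * sv r p hnd ((Ap r hnd p x)⁻¹ v) = sv r p hnd v := by
      rw [K1 hnd hinv hbr hsf hpord x ((Ap r hnd p x)⁻¹ v)]
      congr 1
      exact Equiv.apply_symm_apply _ v
    rw [← h2, ← mul_assoc, inv_mul_cancel, one_mul]
  | mul g1 g2 ih1 ih2 =>
    simp only [map_mul, Equiv.Perm.mul_apply]
    rw [mul_assoc, ih2, ih1]

/-- Cardinality of the quotient. -/
lemma card_quotient (hnd : Nondegenerate r) (hinv : Function.Involutive r) (hbr : IsBraided r)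
    (hsf : ∀ x : X, r (x, x) = (x, x)) (hpord : ∀ x : X, (sig r x)^[p] = id) :
    Nat.card (YBGroup r ⧸ Fp r p) = p ^ Fintype.card X := by
  have hsvchi : ∀ q : YBGroup r ⧸ Fp r p,
      sv r p hnd (PhiBar r p hnd hinv hbr hsf hpord q 0) = q := by
    intro q
    obtain ⟨g, rfl⟩ := QuotientGroup.mk'_surjective (Fp r p) q
    have hq : (QuotientGroup.mk' (Fp r p)) g = qmk r p g := rfl
    rw [hq, PhiBar_mk, ← mainP hnd hinv hbr hsf hpord g 0, sv_zero, mul_one]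
  have hbij : Function.Bijective
      (fun q : YBGroup r ⧸ Fp r p => PhiBar r p hnd hinv hbr hsf hpord q 0) :=
    Function.bijective_iff_has_inverse.mpr
      ⟨sv r p hnd, hsvchi, fun v => chi_sv hnd hinv hbr hsf hpord v⟩
  rw [Nat.card_eq_of_bijective _ hbij, Nat.card_fun, Nat.card_zmod, Nat.card_eq_fintype_card]

end Core

end YB

/-- For a finite square-free solution `(X,r)` of order `n`
with cyclic degree `p`, the subgroup `F_p ≤ G(X,r)` generated by
`{ι(x)^p : x ∈ X}` has index exactly `p^n` in `G(X,r)`. -/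
theorem Fp_index {X : Type*} [Fintype X] (r : X × X → X × X)
    (hnd : Nondegenerate r) (hinv : Function.Involutive r) (hbr : IsBraided r)
    (hsf : ∀ x : X, r (x, x) = (x, x)) (p : ℕ) (hp : 0 < p)
    (hpord : ∀ x : X, (sig r x)^[p] = id)
    (hpmin : ∀ q : ℕ, 0 < q → (∀ x : X, (sig r x)^[q] = id) → p ≤ q) :
    (Subgroup.closure (Set.range fun x : X => ybι r x ^ p)).index
      = p ^ Fintype.card X := by
  letI := Classical.decEq X
  haveI : NeZero p := ⟨hp.ne'⟩
  haveI : (YB.Fp r p).Normal := YB.Fp_normal hnd hinv hbr hsf hpord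
  have h := YB.card_quotient (r := r) (p := p) hnd hinv hbr hsf hpord
  rw [show (Subgroup.closure (Set.range fun x : X => ybι r x ^ p)) = YB.Fp r p from rfl,
    Subgroup.index_eq_card]
  exact h
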